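/- Let X be a normal Hausdorff space that is the union of countably many subspaces C_m each of whose closures is countably compact. Then X is countably paracompact. -/

import Mathlib

open Set Topology Filter

/-- A subset `K` is countably compact if every countably infinite subset of `K` has an
accumulation point in `K`. -/
def CountablyCompactSet {X : Type*} [TopologicalSpace X] (K : Set X) : Prop :=
  ∀ Z ⊆ K, Z.Countable → Z.Infinite → ∃ x ∈ K, AccPt x (𝓟 Z)

/-- A space is countably paracompact if every countable open cover has a locally finite
open refinement. -/
def CountablyParacompact (X : Type*) [TopologicalSpace X] : Prop :=
  ∀ U : ℕ → Set X, (∀ n, IsOpen (U n)) → (⋃ n, U n) = Set.univ →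
    ∃ V : Set (Set X), (∀ v ∈ V, IsOpen v ∧ ∃ n, v ⊆ U n) ∧ ⋃₀ V = Set.univ ∧
      LocallyFinite (fun v : V => (v : Set X))

/-- In a T1 space, every open neighborhood of an accumulation point of `Z` contains
infinitely many points of `Z`. -/
lemma accPt_inter_infinite {X : Type*} [TopologicalSpace X] [T1Space X] {x : X} {Z O : Set X}
    (h : AccPt x (𝓟 Z)) (hO : IsOpen O) (hxO : x ∈ O) : (O ∩ Z).Infinite := by
  intro hfin
  have hfin' : ((O ∩ Z) \ {x}).Finite := hfin.diff
  have hcl : IsClosed ((O ∩ Z) \ {x}) := hfin'.isClosed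
  have hmem : O \ ((O ∩ Z) \ {x}) ∈ 𝓝 x := by
    refine (hO.sdiff hcl).mem_nhds ⟨hxO, ?_⟩
    simp
  obtain ⟨y, hy, hyx⟩ := accPt_iff_nhds.mp h _ hmem
  exact hy.1.2 ⟨⟨hy.1.1, hy.2⟩, hyx⟩

/-- A countably compact set is eventually swallowed by an increasing countable open cover. -/
lemma countablyCompact_subset_partial {X : Type*} [TopologicalSpace X] [T1Space X]
    {K : Set X} (hK : CountablyCompactSet K)
    (U : ℕ → Set X) (hUo : ∀ n, IsOpen (U n)) (hUc : (⋃ n, U n) = Set.univ) :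
    ∃ N, K ⊆ ⋃ j ≤ N, U j := by
  by_contra h
  push_neg at h
  have hx : ∀ N : ℕ, ∃ x, x ∈ K ∧ x ∉ ⋃ j ≤ N, U j := by
    intro N
    obtain ⟨x, hx1, hx2⟩ := not_subset.mp (h N)
    exact ⟨x, hx1, hx2⟩
  choose x hxK hxW using hx
  have hmem : ∀ y : X, ∃ j, y ∈ U j := fun y => mem_iUnion.mp (hUc ▸ mem_univ y)
  have hkey : ∀ {j Nn : ℕ}, x Nn ∈ U j → Nn < j := by
    intro j Nn hu
    by_contra hle
    exact hxW Nn (mem_iUnion₂.mpr ⟨j, Nat.le_of_not_lt hle, hu⟩)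
  by_cases hZ : (range x).Infinite
  · obtain ⟨y, hyK, hacc⟩ := hK (range x) (range_subset_iff.mpr hxK) (countable_range x) hZ
    obtain ⟨j, hj⟩ := hmem y
    have hinf := accPt_inter_infinite hacc (hUo j) hj
    refine hinf (((finite_Iio j).image x).subset ?_)
    rintro _ ⟨hu, Nn, rfl⟩
    exact ⟨Nn, hkey hu, rfl⟩
  · rw [not_infinite] at hZ
    haveI : Finite (range x) := hZ
    obtain ⟨y, hy⟩ := Finite.exists_infinite_fiber (rangeFactorization x)
    have hfib : {n : ℕ | x n = (y : X)}.Infinite := by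
      rw [← infinite_coe_iff]
      have heq : rangeFactorization x ⁻¹' {y} = {n : ℕ | x n = (y : X)} := by
        ext n
        simp [rangeFactorization, Subtype.ext_iff]
      rw [← heq]
      exact hy
    obtain ⟨j, hj⟩ := hmem (y : X)
    obtain ⟨Nn, hNn, hNnj⟩ := hfib.exists_gt j
    exact absurd (hkey (show x Nn ∈ U j from hNn ▸ hj)) (by omega)

/-- A normal Hausdorff space which is a countable union of subspaces with countably
compact closures is countably paracompact. -/
theorem sigma_countablyCompact_closure_implies_countablyParacompact
    {X : Type*} [TopologicalSpace X] [T2Space X] [NormalSpace X]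
    (C : ℕ → Set X) (hcover : (⋃ m, C m) = Set.univ)
    (hcc : ∀ m, CountablyCompactSet (closure (C m))) :
    CountablyParacompact X := by
  classical
  intro U hUo hUc
  set W : ℕ → Set X := fun i => ⋃ j ≤ i, U j with hWdef
  have hWo : ∀ i, IsOpen (W i) := fun i => isOpen_biUnion fun j _ => hUo j
  have hWmono : ∀ {a b : ℕ}, a ≤ b → W a ⊆ W b := by
    intro a b hab y hyW
    obtain ⟨j, hj, hyj⟩ := mem_iUnion₂.mp hyW
    exact mem_iUnion₂.mpr ⟨j, hj.trans hab, hyj⟩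
  have hA : ∀ m, ∃ Nm, closure (C m) ⊆ W Nm :=
    fun m => countablyCompact_subset_partial (hcc m) U hUo hUc
  choose N hN using hA
  set E : ℕ → Set X := fun n => ⋃ m ≤ n, closure (C m) with hEdef
  set M : ℕ → ℕ := fun n => (Finset.Iic n).sup N with hMdef
  have hEc : ∀ n, IsClosed (E n) :=
    fun n => (finite_Iic n).isClosed_biUnion fun m _ => isClosed_closure
  have hEW : ∀ n, E n ⊆ W (M n) := by
    intro n
    refine iUnion₂_subset fun m hm => (hN m).trans (hWmono ?_)
    exact Finset.le_sup (Finset.mem_Iic.mpr hm)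
  have hC : ∀ n, ∃ O, IsOpen O ∧ E n ⊆ O ∧ closure O ⊆ W (M n) :=
    fun n => normal_exists_closure_subset (hEc n) (hWo _) (hEW n)
  choose O hOo hEO hOW using hC
  -- S i : indices n active at stage i
  set S : ℕ → Set ℕ := fun i => {n | n ≤ i ∧ M n ≤ i} with hSdef
  have hSfin : ∀ i, (S i).Finite := fun i => (finite_Iic i).subset fun n hn => hn.1
  set H : ℕ → Set X := fun i => ⋃ n ∈ S i, O n with hHdef
  set clH : ℕ → Set X := fun i => ⋃ n ∈ S i, closure (O n) with hclHdef
  have hHo : ∀ i, IsOpen (H i) := fun i => isOpen_biUnion fun n _ => hOo n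
  have hclHc : ∀ i, IsClosed (clH i) :=
    fun i => (hSfin i).isClosed_biUnion fun n _ => isClosed_closure
  have hHclH : ∀ i, H i ⊆ clH i :=
    fun i => iUnion₂_subset fun n hn => subset_closure.trans
      (subset_iUnion₂ (s := fun n _ => closure (O n)) n hn)
  have hclHW : ∀ i, clH i ⊆ W i :=
    fun i => iUnion₂_subset fun n hn => (hOW n).trans (hWmono hn.2)
  set V : ℕ → Set X := fun i => U i \ ⋃ j < i, clH j with hVdef
  have hVo : ∀ i, IsOpen (V i) :=
    fun i => (hUo i).sdiff ((finite_Iio i).isClosed_biUnion fun j _ => hclHc j)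
  have hmem : ∀ y : X, ∃ j, y ∈ U j := fun y => mem_iUnion.mp (hUc ▸ mem_univ y)
  -- V covers
  have hVcover : ∀ y : X, ∃ i, y ∈ V i := by
    intro y
    have hey := hmem y
    refine ⟨Nat.find hey, Nat.find_spec hey, ?_⟩
    intro hyin
    obtain ⟨j, hj, hyj⟩ := mem_iUnion₂.mp hyin
    obtain ⟨k, hk, hyk⟩ := mem_iUnion₂.mp (hclHW j hyj)
    exact Nat.find_min hey (lt_of_le_of_lt hk hj) hyk
  -- H's "cover": every point lies in some H i
  have hHcover : ∀ y : X, ∃ i, y ∈ H i := by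
    intro y
    obtain ⟨m, hm⟩ := mem_iUnion.mp (hcover ▸ mem_univ y)
    refine ⟨max m (M m), ?_⟩
    have hyE : y ∈ E m := mem_iUnion₂.mpr ⟨m, le_rfl, subset_closure hm⟩
    exact mem_iUnion₂.mpr ⟨m, ⟨le_max_left _ _, le_max_right _ _⟩, hEO m hyE⟩
  -- V i disjoint from H k for k < i
  have hVdisj : ∀ {i k : ℕ}, k < i → ∀ y ∈ V i, y ∉ H k := by
    intro i k hk y hy hyH
    exact hy.2 (mem_iUnion₂.mpr ⟨k, hk, hHclH k hyH⟩)
  refine ⟨range V, ?_, ?_, ?_⟩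
  · rintro v ⟨i, rfl⟩
    exact ⟨hVo i, i, diff_subset⟩
  · rw [sUnion_range]
    exact eq_univ_of_forall fun y => mem_iUnion.mpr (hVcover y)
  · intro y
    obtain ⟨i, hi⟩ := hHcover y
    refine ⟨H i, (hHo i).mem_nhds hi, ?_⟩
    refine Finite.subset (((finite_Iic i).image
      (fun k => (⟨V k, mem_range_self k⟩ : range V))).image Subtype.val |>.preimage
      (Subtype.val_injective.injOn)) ?_
    rintro ⟨v, k, rfl⟩ hne
    obtain ⟨z, hz1, hz2⟩ := hne
    have hki : k ≤ i := by
      by_contra hik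
      exact hVdisj (Nat.lt_of_not_le hik) z hz1 hz2
    simp only [mem_preimage]
    exact mem_image_of_mem _ (mem_image_of_mem _ (mem_Iic.mpr hki))
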